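/- Let R ⊆ ω × (ω)^2_fin be a computable code for an open subset of (ω)^2. Then there is a computable infinite partition p ∈ (ω)^ω such that either every 2-coarsening of p is in the open set R, or every 2-coarsening of p is in the complement of R. -/

import Mathlib

open Set

/-- `f : ℕ → ℕ` is ordered: a value `i` can occur only after all `j < i` have occurred. -/
def IsOrderedFn (f : ℕ → ℕ) : Prop :=
  ∀ n i, f n = i → ∀ j < i, ∃ m < n, f m = j

/-- `(ω)^k`: ordered surjections from `ω` onto `k`. -/
def OmegaPart (k : ℕ) : Set (ℕ → ℕ) :=
  {f | IsOrderedFn f ∧ (∀ n, f n < k) ∧ ∀ i < k, ∃ n, f n = i}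

/-- `(ω)^ω`: ordered surjections from `ω` onto `ω` (infinite partitions). -/
def OmegaPartInf : Set (ℕ → ℕ) :=
  {f | IsOrderedFn f ∧ Function.Surjective f}

/-- `(p)^k`: the `k`-coarsenings of `p`. -/
def Coarsenings (p : ℕ → ℕ) (k : ℕ) : Set (ℕ → ℕ) :=
  {q | q ∈ OmegaPart k ∧ ∀ n m, p n = p m → q n = q m}

/-- `(p)^ω`: the infinite coarsenings of `p`. -/
def CoarseningsInf (p : ℕ → ℕ) : Set (ℕ → ℕ) :=
  {q | q ∈ OmegaPartInf ∧ ∀ n m, p n = p m → q n = q m}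

/-- `μ^x(i)`: the least `n` with `x n = i`. -/
noncomputable def mu (x : ℕ → ℕ) (i : ℕ) : ℕ := sInf {n | x n = i}

/-- `x ↾ n` as a finite string. -/
def restrictList (x : ℕ → ℕ) (n : ℕ) : List ℕ := (List.range n).map x

/-- The basic (cylinder) set `[σ]` of functions extending the finite string `σ`. -/
def Cyl (σ : List ℕ) : Set (ℕ → ℕ) := {x | ∀ n < σ.length, x n = σ.getD n 0}

/-- A finite string is ordered. -/
def ListOrdered (σ : List ℕ) : Prop :=
  ∀ n < σ.length, ∀ j < σ.getD n 0, ∃ m < n, σ.getD m 0 = j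

/-- `(ω)^k_fin`: ordered finite strings over `k` in which all `i < k` appear. -/
def OmegaPartFin (k : ℕ) : Set (List ℕ) :=
  {σ | ListOrdered σ ∧ (∀ a ∈ σ, a < k) ∧ ∀ i < k, i ∈ σ}

/-- Composition `σ ∘ τ` of finite strings: `(σ ∘ τ)(n) = σ(τ(n))`. -/
def listComp (σ τ : List ℕ) : List ℕ := τ.map fun n => σ.getD n 0

/-- `σ'` is a `k`-coarsening of the finite string `τ`. -/
def IsListCoarsening (k : ℕ) (σ' τ : List ℕ) : Prop :=
  σ' ∈ OmegaPartFin k ∧ σ'.length = τ.length ∧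
    ∀ n < τ.length, ∀ m < τ.length,
      τ.getD n 0 = τ.getD m 0 → σ'.getD n 0 = σ'.getD m 0

/-- The open set coded by a set `W` of finite strings. -/
def OpenFrom (W : Set (List ℕ)) : Set (ℕ → ℕ) := {x | ∃ σ ∈ W, x ∈ Cyl σ}

/-- Codes for partial recursive functionals with an oracle. -/
inductive OracleCode : Type
  | oracle : OracleCode
  | zero : OracleCode
  | succ : OracleCode
  | left : OracleCode
  | right : OracleCode
  | pair : OracleCode → OracleCode → OracleCode
  | comp : OracleCode → OracleCode → OracleCode
  | prec : OracleCode → OracleCode → OracleCode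
  | rfind' : OracleCode → OracleCode

/-- Evaluation of an oracle code with oracle `g`. -/
def OracleCode.evalo (g : ℕ →. ℕ) : OracleCode → ℕ →. ℕ
  | .oracle => g
  | .zero => fun _ => Part.some 0
  | .succ => fun n => Part.some (n + 1)
  | .left => fun n => Part.some (Nat.unpair n).1
  | .right => fun n => Part.some (Nat.unpair n).2
  | .pair cf cg => fun n => Nat.pair <$> OracleCode.evalo g cf n <*> OracleCode.evalo g cg n
  | .comp cf cg => fun n => OracleCode.evalo g cg n >>= OracleCode.evalo g cf
  | .prec cf cg =>
      Nat.unpaired fun a n =>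
        n.rec (OracleCode.evalo g cf a) fun y IH => do
          let i ← IH
          OracleCode.evalo g cg (Nat.pair a (Nat.pair y i))
  | .rfind' cf =>
      Nat.unpaired fun a m =>
        (Nat.rfind fun n =>
            (fun x => decide (x = 0)) <$> OracleCode.evalo g cf (Nat.pair a (n + m))).map (· + m)

/-- View a total function as a partial function. -/
def toP (f : ℕ → ℕ) : ℕ →. ℕ := fun n => Part.some (f n)

/-- `f` is Turing reducible to `g`. -/
def TuringReducibleFun (f g : ℕ → ℕ) : Prop :=
  ∃ c : OracleCode, c.evalo (toP g) = toP f

open Classical in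
/-- Characteristic function of a set of naturals. -/
noncomputable def chi (A : Set ℕ) : ℕ → ℕ := fun n => if n ∈ A then 1 else 0

/-- A numbering of oracle codes. -/
def OracleCode.encodeC : OracleCode → ℕ
  | .oracle => 0
  | .zero => 1
  | .succ => 2
  | .left => 3
  | .right => 4
  | .pair a b => Nat.pair a.encodeC b.encodeC * 4 + 5
  | .comp a b => Nat.pair a.encodeC b.encodeC * 4 + 6
  | .prec a b => Nat.pair a.encodeC b.encodeC * 4 + 7
  | .rfind' a => a.encodeC * 4 + 8

/-- The Turing jump of (the characteristic function) `g`. -/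
def JumpSet (g : ℕ → ℕ) : Set ℕ :=
  {n | ∃ c : OracleCode, ∃ m, n = Nat.pair c.encodeC m ∧ (c.evalo (toP g) m).Dom}

/-- `∅^{(n)}`: the iterated Turing jump of the empty set. -/
noncomputable def EmptyIter : ℕ → Set ℕ
  | 0 => (∅ : Set ℕ)
  | n + 1 => JumpSet (chi (EmptyIter n))

/-- The clopen set coded by the leaf label `e`: `∅`, `univ`, `[τ_m]`, or its complement. -/
def leafSet (e : ℕ) : Set (ℕ → ℕ) :=
  if e = 0 then ∅
  else if e = 1 then Set.univ
  else if e % 2 = 0 then Cyl (Denumerable.ofNat (List ℕ) (e / 2 - 1))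
  else (Cyl (Denumerable.ofNat (List ℕ) (e / 2 - 1)))ᶜ

/-- Evaluation of a normal-form Borel code of height `m` (alternating ∃/∀ over the
labelling function `f` on tuples, `true` for Σ, `false` for Π). -/
def NFEval : ℕ → Bool → (List ℕ → ℕ) → (ℕ → ℕ) → Prop
  | 0, _, f, x => x ∈ leafSet (f [])
  | m + 1, true, f, x => ∃ t, NFEval m false (fun l => f (t :: l)) x
  | m + 1, false, f, x => ∀ t, NFEval m true (fun l => f (t :: l)) x

namespace Stmt10

/-- decoded string part of a search candidate -/
def decS (k : ℕ) : List ℕ := Denumerable.ofNat (List ℕ) k.unpair.2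
/-- decoded position part of a search candidate -/
def decM (k : ℕ) : ℕ := k.unpair.1

/-- normal form of a binary string compatible with `0^m 1` -/
def normF (m : ℕ) (σ : List ℕ) (j : ℕ) : ℕ :=
  if j < m then 0 else if j = m then 1 else min (σ.getD j 0) 1

def normL (k : ℕ) : List ℕ := (List.range (decS k).length).map (normF (decM k) (decS k))

/-- `k` codes a pair `(m, σ)` with `t ≤ m`, `c σ = true`, `σ` binary compatible with `0^m 1`. -/
def goodB (c : List ℕ → Bool) (t k : ℕ) : Bool :=
  cond (decide (t ≤ decM k)) (cond (c (decS k)) (decide (normL k = decS k)) false) false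

lemma goodB_iff (c : List ℕ → Bool) (t k : ℕ) :
    goodB c t k = true ↔ t ≤ decM k ∧ c (decS k) = true ∧ normL k = decS k := by
  unfold goodB
  by_cases h1 : t ≤ decM k <;> cases hc : c (decS k) <;> simp [h1, hc]

/-- the string `τ` obtained by padding `σ` to force position `m` to be `1` -/
def tauOf (k : ℕ) : List ℕ :=
  if (decS k).length ≤ decM k then
    decS k ++ (((List.range (decM k - (decS k).length)).map fun _ => 0) ++ [1])
  else decS k

lemma primrec_decS : Primrec decS :=
  (Primrec.ofNat (List ℕ)).comp (Primrec.snd.comp Primrec.unpair)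

lemma primrec_decM : Primrec decM := Primrec.fst.comp Primrec.unpair

lemma primrec_normF : Primrec₂ fun k j => normF (decM k) (decS k) j := by
  unfold normF
  exact Primrec.ite (Primrec.nat_lt.comp Primrec.snd (primrec_decM.comp Primrec.fst))
    (Primrec.const 0)
    (Primrec.ite (Primrec.eq.comp Primrec.snd (primrec_decM.comp Primrec.fst))
      (Primrec.const 1)
      (Primrec.nat_min.comp
        ((Primrec.list_getD 0).comp (primrec_decS.comp Primrec.fst) Primrec.snd)
        (Primrec.const 1)))

lemma primrec_normL : Primrec normL :=
  Primrec.list_map (Primrec.list_range.comp (Primrec.list_length.comp primrec_decS)) primrec_normF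

lemma primrec_tauOf : Primrec tauOf :=
  Primrec.ite (Primrec.nat_le.comp (Primrec.list_length.comp primrec_decS) primrec_decM)
    (Primrec.list_append.comp primrec_decS
      (Primrec.list_append.comp
        (Primrec.list_map
          (Primrec.list_range.comp
            (Primrec.nat_sub.comp primrec_decM (Primrec.list_length.comp primrec_decS)))
          (Primrec.const 0).to₂)
        (Primrec.const [1])))
    primrec_decS

lemma computable_goodB {c : List ℕ → Bool} (hc : Computable c) : Computable₂ (goodB c) := by
  have h1 : Computable fun p : ℕ × ℕ => decide (p.1 ≤ decM p.2) :=
    Primrec.to_comp (Primrec.nat_le.comp Primrec.fst (primrec_decM.comp Primrec.snd)).decide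
  have h2 : Computable fun p : ℕ × ℕ => c (decS p.2) :=
    hc.comp (primrec_decS.comp Primrec.snd).to_comp
  have h3 : Computable fun p : ℕ × ℕ => decide (normL p.2 = decS p.2) :=
    Primrec.to_comp (Primrec.eq.comp (primrec_normL.comp Primrec.snd)
      (primrec_decS.comp Primrec.snd)).decide
  exact (Computable.cond h1 (Computable.cond h2 h3 (Computable.const false))
    (Computable.const false)).to₂

section Construction

variable (c : List ℕ → Bool) (h : ∀ t, ∃ k, goodB c t k = true)

/-- least good candidate above `t` -/
def findK (t : ℕ) : ℕ := Nat.find (h t)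

lemma findK_spec (t : ℕ) : goodB c t (findK c h t) = true := Nat.find_spec (h t)

/-- the increasing sequence of length bounds -/
def bnd : ℕ → ℕ := fun i =>
  Nat.rec (motive := fun _ => ℕ) 1 (fun _ ih => (tauOf (findK c h ih)).length) i

def tauI (i : ℕ) : List ℕ := tauOf (findK c h (bnd c h i))
def sigI (i : ℕ) : List ℕ := decS (findK c h (bnd c h i))
def mI (i : ℕ) : ℕ := decM (findK c h (bnd c h i))

/-- summand used to define the partition computably -/
def gF (j i : ℕ) : ℕ :=
  cond (decide (j < (tauI c h i).length))
    (cond (decide ((tauI c h i).getD j 0 = 1)) (i + 1) 0) 0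

/-- the homogeneous partition -/
def pB (j : ℕ) : ℕ := ∑ i ∈ Finset.range (j + 1), gF c h j i

end Construction

end Stmt10


namespace Stmt10
section Construction
variable (c : List ℕ → Bool) (h : ∀ t, ∃ k, goodB c t k = true)

lemma computable_findK (hc : Computable c) : Computable (findK c h) := by
  have hp : Partrec₂ fun t k : ℕ => ((goodB c t k : Part Bool)) :=
    (computable_goodB hc).partrec₂
  refine (Partrec.rfind hp).of_eq_tot fun t => ?_
  refine Nat.mem_rfind.2 ⟨?_, fun {m} hm => ?_⟩
  · exact Part.mem_some_iff.2 (findK_spec c h t).symm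
  · exact Part.mem_some_iff.2 (Bool.eq_false_iff.2 (Nat.find_min (h t) hm)).symm

lemma computable_bnd (hc : Computable c) : Computable (bnd c h) := by
  have := Computable.nat_rec (Computable.id (α := ℕ)) (Computable.const 1)
    (((Primrec.list_length.comp primrec_tauOf).to_comp.comp
      ((computable_findK c h hc).comp (Computable.snd.comp Computable.snd))).to₂)
  exact this.of_eq fun i => rfl

lemma computable_tauI (hc : Computable c) : Computable (tauI c h) :=
  primrec_tauOf.to_comp.comp ((computable_findK c h hc).comp (computable_bnd c h hc))

lemma computable_gF (hc : Computable c) : Computable₂ (gF c h) := by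
  have htau := computable_tauI c h hc
  have hlen : Computable fun p : ℕ × ℕ => decide (p.1 < (tauI c h p.2).length) :=
    Primrec.nat_lt.decide.to_comp.comp Computable.fst
      (Primrec.list_length.to_comp.comp (htau.comp Computable.snd))
  have hget : Computable fun p : ℕ × ℕ => decide ((tauI c h p.2).getD p.1 0 = 1) :=
    (Primrec.eq (α := ℕ)).decide.to_comp.comp
      ((Primrec.list_getD 0).to_comp.comp (htau.comp Computable.snd) Computable.fst)
      (Computable.const 1)
  exact (Computable.cond hlen
    (Computable.cond hget (Computable.succ.comp Computable.snd) (Computable.const 0))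
    (Computable.const 0)).to₂

lemma computable_pB (hc : Computable c) : Computable (pB c h) := by
  have hg := computable_gF c h hc
  have hstep : Computable₂ fun (j : ℕ) (p : ℕ × ℕ) => p.2 + gF c h j p.1 :=
    (Primrec.nat_add.to_comp.comp (Computable.snd.comp Computable.snd)
      (hg.comp Computable.fst (Computable.fst.comp Computable.snd))).to₂
  have := Computable.nat_rec Computable.succ (Computable.const 0) hstep
  refine this.of_eq fun j => ?_
  show (Nat.rec 0 (fun y IH => IH + gF c h j y) (j + 1) : ℕ) = pB c h j
  have key : ∀ n, (Nat.rec 0 (fun y IH => IH + gF c h j y) n : ℕ)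
      = ∑ i ∈ Finset.range n, gF c h j i := by
    intro n
    induction n with
    | zero => simp
    | succ n ih => rw [Finset.sum_range_succ, ← ih]
  exact key (j + 1)

end Construction
end Stmt10


namespace Stmt10

lemma norm_getD {m : ℕ} {σ : List ℕ} (hn : (List.range σ.length).map (normF m σ) = σ)
    {j : ℕ} (hj : j < σ.length) : σ.getD j 0 = normF m σ j := by
  conv_lhs => rw [← hn]
  rw [List.getD_eq_getElem _ _ (by simpa using hj), List.getElem_map, List.getElem_range]

lemma tauOf_len (k : ℕ) : (tauOf k).length = max (decS k).length (decM k + 1) := by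
  unfold tauOf; split
  · simp only [List.length_append, List.length_map, List.length_range, List.length_singleton]
    omega
  · omega

lemma tauOf_ext (k : ℕ) {j : ℕ} (hj : j < (decS k).length) :
    (tauOf k).getD j 0 = (decS k).getD j 0 := by
  unfold tauOf; split
  · exact List.getD_append _ _ _ _ hj
  · rfl

lemma tauOf_pad {k j : ℕ} (hσ : (decS k).length ≤ j) (hj : j < decM k) :
    (tauOf k).getD j 0 = 0 := by
  unfold tauOf
  rw [if_pos (le_of_lt (lt_of_le_of_lt hσ hj))]
  rw [List.getD_append_right _ _ _ _ hσ]
  rw [List.getD_append _ _ _ _ (by simp only [List.length_map, List.length_range]; omega)]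
  rw [List.getD_eq_getElem _ _ (by simp only [List.length_map, List.length_range]; omega)]
  simp

section Construction
variable (c : List ℕ → Bool) (h : ∀ t, ∃ k, goodB c t k = true)

lemma bnd_le_mI (i : ℕ) : bnd c h i ≤ mI c h i :=
  ((goodB_iff c _ _).1 (findK_spec c h (bnd c h i))).1

lemma cI_true (i : ℕ) : c (sigI c h i) = true :=
  ((goodB_iff c _ _).1 (findK_spec c h (bnd c h i))).2.1

lemma normI (i : ℕ) :
    (List.range (sigI c h i).length).map (normF (mI c h i) (sigI c h i)) = sigI c h i :=
  ((goodB_iff c _ _).1 (findK_spec c h (bnd c h i))).2.2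

lemma sigI_getD (i : ℕ) {j : ℕ} (hj : j < (sigI c h i).length) :
    (sigI c h i).getD j 0 = normF (mI c h i) (sigI c h i) j :=
  norm_getD (normI c h i) hj

lemma sigI_le_one (i j : ℕ) : (sigI c h i).getD j 0 ≤ 1 := by
  by_cases hj : j < (sigI c h i).length
  · rw [sigI_getD c h i hj]
    unfold normF
    split
    · omega
    · split
      · omega
      · exact min_le_right _ _
  · rw [List.getD_eq_default _ _ (le_of_not_gt hj)]
    omega

lemma tauI_len (i : ℕ) : (tauI c h i).length = max (sigI c h i).length (mI c h i + 1) :=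
  tauOf_len _

lemma mI_lt_len (i : ℕ) : mI c h i < (tauI c h i).length := by
  rw [tauI_len]; omega

lemma tauI_ext (i : ℕ) {j : ℕ} (hj : j < (sigI c h i).length) :
    (tauI c h i).getD j 0 = (sigI c h i).getD j 0 :=
  tauOf_ext _ hj

lemma tauOf_m {k : ℕ}
    (hn : (List.range (decS k).length).map (normF (decM k) (decS k)) = decS k) :
    (tauOf k).getD (decM k) 0 = 1 := by
  unfold tauOf
  split
  · rename_i hle
    rw [List.getD_append_right _ _ _ _ hle,
      List.getD_append_right _ _ _ _ (by simp)]
    simp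
  · rename_i hgt
    have hlt : decM k < (decS k).length := lt_of_not_ge hgt
    rw [norm_getD hn hlt]
    unfold normF
    rw [if_neg (lt_irrefl _), if_pos rfl]

lemma tauI_m (i : ℕ) : (tauI c h i).getD (mI c h i) 0 = 1 :=
  tauOf_m (normI c h i)

lemma tauI_zero (i : ℕ) {j : ℕ} (hj : j < mI c h i) : (tauI c h i).getD j 0 = 0 := by
  by_cases hσ : j < (sigI c h i).length
  · rw [tauI_ext c h i hσ, sigI_getD c h i hσ]
    unfold normF
    rw [if_pos hj]
  · exact tauOf_pad (le_of_not_gt hσ) hj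

lemma tauI_le_one (i j : ℕ) : (tauI c h i).getD j 0 ≤ 1 := by
  by_cases hlen : j < (tauI c h i).length
  · by_cases hσ : j < (sigI c h i).length
    · rw [tauI_ext c h i hσ]; exact sigI_le_one c h i j
    · have hjm : j ≤ mI c h i := by
        have := tauI_len c h i; omega
      rcases lt_or_eq_of_le hjm with hlt | heq
      · rw [tauI_zero c h i hlt]
        omega
      · subst heq; rw [tauI_m]
  · rw [List.getD_eq_default _ _ (le_of_not_gt hlen)]
    omega

lemma bnd_succ (i : ℕ) : bnd c h (i + 1) = (tauI c h i).length := rfl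

lemma bnd_lt_succ (i : ℕ) : bnd c h i < bnd c h (i + 1) := by
  rw [bnd_succ]
  exact lt_of_le_of_lt (bnd_le_mI c h i) (mI_lt_len c h i)

lemma bnd_mono : StrictMono (bnd c h) :=
  strictMono_nat_of_lt_succ (bnd_lt_succ c h)

lemma one_le_bnd (i : ℕ) : 1 ≤ bnd c h i := by
  have : bnd c h 0 = 1 := rfl
  have := (bnd_mono c h).monotone (Nat.zero_le i)
  omega

lemma lt_bnd (i : ℕ) : i < bnd c h i := by
  induction i with
  | zero => exact one_le_bnd c h 0
  | succ n ih => exact lt_of_le_of_lt ih (bnd_lt_succ c h n)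

/-- `j` belongs to block `i+1` of the partition -/
def Cb (i j : ℕ) : Prop := j < (tauI c h i).length ∧ (tauI c h i).getD j 0 = 1

lemma gF_of {i j : ℕ} (hC : Cb c h i j) : gF c h j i = i + 1 := by
  unfold gF
  rw [decide_eq_true hC.1, decide_eq_true hC.2]
  rfl

lemma gF_of_not {i j : ℕ} (hC : ¬ Cb c h i j) : gF c h j i = 0 := by
  unfold gF
  by_cases h1 : j < (tauI c h i).length
  · by_cases h2 : (tauI c h i).getD j 0 = 1
    · exact absurd ⟨h1, h2⟩ hC
    · rw [decide_eq_true h1, decide_eq_false h2]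
      rfl
  · rw [decide_eq_false h1]
    rfl

lemma Cb_lb {i j : ℕ} (hC : Cb c h i j) : mI c h i ≤ j := by
  by_contra hlt
  have h1 := tauI_zero c h i (lt_of_not_ge hlt)
  have h2 := hC.2
  omega

lemma Cb_bounds {i j : ℕ} (hC : Cb c h i j) :
    bnd c h i ≤ j ∧ j < bnd c h (i + 1) :=
  ⟨le_trans (bnd_le_mI c h i) (Cb_lb c h hC), (bnd_succ c h i) ▸ hC.1⟩

lemma Cb_unique {i i' j : ℕ} (hC : Cb c h i j) (hC' : Cb c h i' j) : i = i' := by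
  by_contra hne
  obtain ⟨b1, b2⟩ := Cb_bounds c h hC
  obtain ⟨b1', b2'⟩ := Cb_bounds c h hC'
  rcases Nat.lt_or_ge i i' with hlt | hge
  · have := (bnd_mono c h).monotone (show i + 1 ≤ i' by omega)
    omega
  · have := (bnd_mono c h).monotone (show i' + 1 ≤ i by omega)
    omega

lemma Cb_self (i : ℕ) : Cb c h i (mI c h i) := ⟨mI_lt_len c h i, tauI_m c h i⟩

lemma pB_of {i j : ℕ} (hC : Cb c h i j) : pB c h j = i + 1 := by
  have hij : i < j + 1 := by
    have h1 := lt_bnd c h i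
    have h2 := bnd_le_mI c h i
    have h3 := Cb_lb c h hC
    omega
  unfold pB
  rw [Finset.sum_eq_single_of_mem i (Finset.mem_range.2 hij)]
  · exact gF_of c h hC
  · intro b _ hb
    exact gF_of_not c h (fun hCb => hb (Cb_unique c h hCb hC))

lemma pB_of_not {j : ℕ} (hn : ∀ i, ¬ Cb c h i j) : pB c h j = 0 :=
  Finset.sum_eq_zero fun i _ => gF_of_not c h (hn i)

lemma pB_cases (j : ℕ) : (pB c h j = 0 ∧ ∀ i, ¬ Cb c h i j) ∨
    ∃ i, Cb c h i j ∧ pB c h j = i + 1 := by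
  by_cases hE : ∃ i, Cb c h i j
  · obtain ⟨i, hC⟩ := hE
    exact Or.inr ⟨i, hC, pB_of c h hC⟩
  · push_neg at hE
    exact Or.inl ⟨pB_of_not c h hE, hE⟩

lemma pB_zero : pB c h 0 = 0 := by
  refine pB_of_not c h fun i hC => ?_
  have h1 := Cb_lb c h hC
  have h2 := bnd_le_mI c h i
  have h3 := one_le_bnd c h i
  omega

lemma pB_mem : pB c h ∈ OmegaPartInf := by
  constructor
  · intro n v hpn j hj
    rcases pB_cases c h n with ⟨h0, _⟩ | ⟨i, hC, hval⟩
    · omega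
    · have hv : v = i + 1 := by omega
      subst hv
      have hn_lb : mI c h i ≤ n := Cb_lb c h hC
      have hbnd : bnd c h i ≤ mI c h i := bnd_le_mI c h i
      rcases Nat.eq_zero_or_pos j with hj0 | hjpos
      · subst hj0
        refine ⟨0, ?_, pB_zero c h⟩
        have := one_le_bnd c h i
        omega
      · obtain ⟨k, rfl⟩ : ∃ k, j = k + 1 := ⟨j - 1, by omega⟩
        refine ⟨mI c h k, ?_, pB_of c h (Cb_self c h k)⟩
        have h1 : mI c h k < bnd c h (k + 1) := (bnd_succ c h k) ▸ mI_lt_len c h k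
        have h2 : bnd c h (k + 1) ≤ bnd c h i := (bnd_mono c h).monotone (by omega)
        omega
  · intro v
    rcases Nat.eq_zero_or_pos v with hv | hv
    · exact ⟨0, by rw [pB_zero c h, hv]⟩
    · obtain ⟨i, rfl⟩ : ∃ i, v = i + 1 := ⟨v - 1, by omega⟩
      exact ⟨mI c h i, pB_of c h (Cb_self c h i)⟩

end Construction
end Stmt10


namespace Stmt10
section Construction
variable (c : List ℕ → Bool) (h : ∀ t, ∃ k, goodB c t k = true)

lemma q_zero {q : ℕ → ℕ} (hqo : IsOrderedFn q) : q 0 = 0 := by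
  by_contra hne
  obtain ⟨m, hm, -⟩ := hqo 0 (q 0) rfl 0 (Nat.pos_of_ne_zero hne)
  omega

lemma pB_hom : Coarsenings (pB c h) 2 ⊆ OpenFrom {σ | c σ = true} := by
  rintro q ⟨⟨hqo, hq2, hqs⟩, hqc⟩
  have hq0 : q 0 = 0 := q_zero hqo
  obtain ⟨n1, hn1⟩ := hqs 1 (by norm_num)
  have hex : ∃ i, q (mI c h i) = 1 := by
    rcases pB_cases c h n1 with ⟨h0, _⟩ | ⟨i, hC, hval⟩
    · have : q n1 = q 0 := hqc n1 0 (by rw [h0, pB_zero c h])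
      omega
    · refine ⟨i, ?_⟩
      have : q (mI c h i) = q n1 := hqc _ _ (by rw [pB_of c h (Cb_self c h i), hval])
      omega
  set i0 := Nat.find hex with hi0
  refine ⟨sigI c h i0, cI_true c h i0, ?_⟩
  intro j hj
  have hjτ : j < (tauI c h i0).length := by
    have := tauI_len c h i0
    omega
  rw [← tauI_ext c h i0 hj]
  have hb := tauI_le_one c h i0 j
  by_cases h1 : (tauI c h i0).getD j 0 = 1
  · rw [h1]
    have hC : Cb c h i0 j := ⟨hjτ, h1⟩
    have : q j = q (mI c h i0) :=
      hqc _ _ (by rw [pB_of c h hC, pB_of c h (Cb_self c h i0)])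
    rw [this]
    exact Nat.find_spec hex
  · have h0 : (tauI c h i0).getD j 0 = 0 := by omega
    rw [h0]
    rcases pB_cases c h j with ⟨hz, _⟩ | ⟨i', hC', hval'⟩
    · have : q j = q 0 := hqc j 0 (by rw [hz, pB_zero c h])
      omega
    · rcases Nat.lt_trichotomy i' i0 with hlt | heq | hgt
      · have hji : q j = q (mI c h i') :=
          hqc _ _ (by rw [hval', pB_of c h (Cb_self c h i')])
        have hne : ¬ q (mI c h i') = 1 := Nat.find_min hex hlt
        have := hq2 (mI c h i')
        omega
      · subst heq
        exact absurd hC'.2 h1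
      · have hb1 := (Cb_bounds c h hC').1
        have hb2 : bnd c h (i0 + 1) ≤ bnd c h i' := (bnd_mono c h).monotone (by omega)
        have hb3 : bnd c h (i0 + 1) = (tauI c h i0).length := bnd_succ c h i0
        omega

end Construction
end Stmt10


/-- every computable open code for a 2-coloring of `(ω)^2` has a
computable homogeneous infinite partition. -/
theorem stmt10 (c : List ℕ → Bool) (hc : Computable c) :
    ∃ p : ℕ → ℕ, Computable p ∧ p ∈ OmegaPartInf ∧
      (Coarsenings p 2 ⊆ OpenFrom {σ | c σ = true} ∨
       ∀ x ∈ Coarsenings p 2, x ∉ OpenFrom {σ | c σ = true}) := by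
  by_cases hB : ∀ t, ∃ k, Stmt10.goodB c t k = true
  · exact ⟨Stmt10.pB c hB, Stmt10.computable_pB c hB hc, Stmt10.pB_mem c hB,
      Or.inl (Stmt10.pB_hom c hB)⟩
  · push_neg at hB
    obtain ⟨t, ht⟩ := hB
    refine ⟨fun j => j - t, ?_, ⟨?_, ?_⟩, Or.inr ?_⟩
    · exact (Primrec.nat_sub.comp Primrec.id (Primrec.const t)).to_comp
    · -- ordered
      intro n v hpn j hj
      have hpn' : n - t = v := hpn
      rcases Nat.eq_zero_or_pos j with hj0 | hjpos
      · exact ⟨0, by omega, show 0 - t = j by omega⟩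
      · exact ⟨j + t, by omega, show j + t - t = j by omega⟩
    · -- surjective
      intro v
      rcases Nat.eq_zero_or_pos v with hv | hv
      · exact ⟨0, show 0 - t = v by omega⟩
      · exact ⟨v + t, show v + t - t = v by omega⟩
    · -- every coarsening avoids the open set
      rintro q ⟨⟨hqo, hq2, hqs⟩, hqc⟩ ⟨σ, hσc, hσq⟩
      have hq0 : q 0 = 0 := Stmt10.q_zero hqo
      have hql : ∀ j ≤ t, q j = 0 := by
        intro j hjt
        have : q j = q 0 := hqc j 0 (show j - t = 0 - t by omega)
        omega
      obtain ⟨n1, hn1⟩ := hqs 1 (by norm_num)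
      have hexm : ∃ m, q m = 1 := ⟨n1, hn1⟩
      set m := Nat.find hexm with hm
      have hqm : q m = 1 := Nat.find_spec hexm
      have hmt : t < m := by
        by_contra hle
        have := hql m (by omega)
        omega
      have hqlt : ∀ j < m, q j = 0 := by
        intro j hjm
        have h1 : ¬ q j = 1 := Nat.find_min hexm hjm
        have h2 := hq2 j
        omega
      apply ht (Nat.pair m (Encodable.encode σ))
      have hdS : Stmt10.decS (Nat.pair m (Encodable.encode σ)) = σ := by
        simp [Stmt10.decS, Nat.unpair_pair, Denumerable.ofNat_encode]
      have hdM : Stmt10.decM (Nat.pair m (Encodable.encode σ)) = m := by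
        simp [Stmt10.decM, Nat.unpair_pair]
      rw [Stmt10.goodB_iff, hdM, hdS]
      refine ⟨le_of_lt hmt, hσc, ?_⟩
      unfold Stmt10.normL
      rw [hdS, hdM]
      refine List.ext_getElem (by simp) fun i h1 h2 => ?_
      rw [List.getElem_map, List.getElem_range]
      have hiq : σ.getD i 0 = q i := (hσq i h2).symm
      have hσi : σ[i] = σ.getD i 0 := (List.getD_eq_getElem σ 0 h2).symm
      rw [hσi, hiq]
      unfold Stmt10.normF
      rcases Nat.lt_trichotomy i m with hlt | heq | hgt
      · rw [if_pos hlt, hqlt i hlt]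
      · subst heq
        rw [if_neg (lt_irrefl _), if_pos rfl, hqm]
      · rw [if_neg (by omega), if_neg (by omega), hiq]
        have := hq2 i
        omega
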